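/- (Unfolded graph duality) Let φ(G) be the unfolded graph of G: for each node u of G, φ(G) has copies u^1, …, u^α where α is the maximum weight of an edge incident to u, and for each edge uv of G with w(u,v) = β, φ(G) has the unweighted edges u^1 v^β, u^2 v^{β−1}, …, u^β v^1. Then the maximum weight of a matching of G equals the maximum cardinality of a matching of φ(G): mwm(G) = mm(φ(G)). -/
import Mathlib


open Finset

variable {V : Type*} [Fintype V] [DecidableEq V]

/-- `C` is a (weighted vertex) cover of the bipartite graph on parts `X`, `Y`
with edge weights `w` (where `w x y = 0` means no edge). -/
def IsCover (X Y : Finset V) (w : V → V → ℕ) (C : V → ℕ) : Prop :=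
  ∀ x ∈ X, ∀ y ∈ Y, w x y ≤ C x + C y

/-- The weight of a cover: the sum of its values over all nodes. -/
def coverWt (X Y : Finset V) (C : V → ℕ) : ℕ := ∑ u ∈ X ∪ Y, C u

/-- `M` is a matching of the weighted bipartite graph: a set of pairwise
node-disjoint edges, each going from `X` to `Y` with positive weight. -/
def IsBMatching (X Y : Finset V) (w : V → V → ℕ) (M : Finset (V × V)) : Prop :=
  (∀ e ∈ M, e.1 ∈ X ∧ e.2 ∈ Y ∧ 0 < w e.1 e.2) ∧
  (∀ e ∈ M, ∀ f ∈ M, e ≠ f → e.1 ≠ f.1 ∧ e.2 ≠ f.2)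

/-- The total weight of a matching. -/
def mWt (w : V → V → ℕ) (M : Finset (V × V)) : ℕ := ∑ e ∈ M, w e.1 e.2

open Classical in
/-- The maximum weight of a matching of the bipartite graph `(X, Y, w)`. -/
noncomputable def mwm (X Y : Finset V) (w : V → V → ℕ) : ℕ :=
  Finset.sup ((Finset.univ : Finset (V × V)).powerset.filter fun M => IsBMatching X Y w M)
    fun M => mWt w M

/-- The minimum weight of a cover of the bipartite graph `(X, Y, w)`. -/
noncomputable def mwc (X Y : Finset V) (w : V → V → ℕ) : ℕ :=
  sInf {n : ℕ | ∃ C : V → ℕ, IsCover X Y w C ∧ coverWt X Y C = n}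

/-- Adjacency in the unfolded graph `φ(G)`: the copies `u^i` of a node `u` are the
pairs `(u, i)` with `i ≥ 1`, and for each edge `uv` of weight `β = w u v` the
unfolded graph has the (unweighted) edges `u^i v^{β+1-i}` for `1 ≤ i ≤ β`. -/
def phiAdj (X Y : Finset V) (w : V → V → ℕ) (a b : V × ℕ) : Prop :=
  (a.1 ∈ X ∧ b.1 ∈ Y ∧ 1 ≤ a.2 ∧ 1 ≤ b.2 ∧ 0 < w a.1 b.1 ∧ a.2 + b.2 = w a.1 b.1 + 1) ∨
  (b.1 ∈ X ∧ a.1 ∈ Y ∧ 1 ≤ b.2 ∧ 1 ≤ a.2 ∧ 0 < w b.1 a.1 ∧ b.2 + a.2 = w b.1 a.1 + 1)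

/-- `M` is a matching (set of pairwise node-disjoint edges) of the unweighted
graph with adjacency relation `adj`. -/
def IsUMatching {α : Type*} (adj : α → α → Prop) (M : Finset (α × α)) : Prop :=
  (∀ e ∈ M, adj e.1 e.2) ∧ (∀ e ∈ M, e.1 ≠ e.2) ∧
  (∀ e ∈ M, ∀ f ∈ M, e ≠ f →
    e.1 ≠ f.1 ∧ e.1 ≠ f.2 ∧ e.2 ≠ f.1 ∧ e.2 ≠ f.2)

/-- The unfolding `φ(M)` of a matching `M` of `G`: each edge `uv ∈ M` of weight
`β` contributes the edges `u^1 v^β, …, u^β v^1`. -/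
def phiM (w : V → V → ℕ) (M : Finset (V × V)) : Finset ((V × ℕ) × (V × ℕ)) :=
  M.biUnion fun e =>
    (Finset.Icc 1 (w e.1 e.2)).image fun i => ((e.1, i), (e.2, w e.1 e.2 + 1 - i))

/-- The number of copies of a node `u` in the unfolded graph: the maximum weight
of an edge incident to `u`. -/
def alphaCopies (X Y : Finset V) (w : V → V → ℕ) (u : V) : ℕ :=
  (X ∪ Y).sup fun v => max (w u v) (w v u)

lemma mem_phiM_iff {w : V → V → ℕ} {M : Finset (V × V)} {a : (V × ℕ) × (V × ℕ)} :
    a ∈ phiM w M ↔ ∃ e ∈ M, ∃ i, 1 ≤ i ∧ i ≤ w e.1 e.2 ∧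
      a = ((e.1, i), (e.2, w e.1 e.2 + 1 - i)) := by
  simp only [phiM, Finset.mem_biUnion, Finset.mem_image, Finset.mem_Icc]
  constructor
  · rintro ⟨e, he, i, ⟨h1, h2⟩, rfl⟩
    exact ⟨e, he, i, h1, h2, rfl⟩
  · rintro ⟨e, he, i, h1, h2, rfl⟩
    exact ⟨e, he, i, ⟨h1, h2⟩, rfl⟩

lemma phiM_isUMatching (X Y : Finset V) (hXY : Disjoint X Y) (w : V → V → ℕ)
    (M : Finset (V × V)) (hM : IsBMatching X Y w M) :
    IsUMatching (phiAdj X Y w) (phiM w M) := by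
  have hne : ∀ x ∈ X, ∀ y ∈ Y, x ≠ y := fun x hx y hy h =>
    Finset.disjoint_left.mp hXY hx (h ▸ hy)
  refine ⟨?_, ?_, ?_⟩
  · rintro a ha
    obtain ⟨e, he, i, h1, h2, rfl⟩ := mem_phiM_iff.mp ha
    obtain ⟨hx, hy, hw⟩ := hM.1 e he
    refine Or.inl ⟨hx, hy, h1, ?_, hw, ?_⟩
    · show 1 ≤ w e.1 e.2 + 1 - i; omega
    · show i + (w e.1 e.2 + 1 - i) = w e.1 e.2 + 1; omega
  · rintro a ha
    obtain ⟨e, he, i, h1, h2, rfl⟩ := mem_phiM_iff.mp ha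
    obtain ⟨hx, hy, hw⟩ := hM.1 e he
    intro h
    exact hne _ hx _ hy (Prod.ext_iff.mp h).1
  · rintro a ha b hb hab
    obtain ⟨e, he, i, hi1, hi2, rfl⟩ := mem_phiM_iff.mp ha
    obtain ⟨f, hf, j, hj1, hj2, rfl⟩ := mem_phiM_iff.mp hb
    obtain ⟨hex, hey, hew⟩ := hM.1 e he
    obtain ⟨hfx, hfy, hfw⟩ := hM.1 f hf
    by_cases hef : e = f
    · subst hef
      have hij : i ≠ j := fun h => hab (by simp [h])
      refine ⟨?_, ?_, ?_, ?_⟩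
      · intro h; exact hij (Prod.ext_iff.mp h).2
      · intro h; exact hne _ hex _ hey (Prod.ext_iff.mp h).1
      · intro h; exact hne _ hfx _ hey ((Prod.ext_iff.mp h).1).symm
      · intro h
        have h2 : w e.1 e.2 + 1 - i = w e.1 e.2 + 1 - j := (Prod.ext_iff.mp h).2
        omega
    · obtain ⟨h1, h2⟩ := hM.2 e he f hf hef
      refine ⟨?_, ?_, ?_, ?_⟩
      · intro h; exact h1 (Prod.ext_iff.mp h).1
      · intro h; exact hne _ hex _ hfy (Prod.ext_iff.mp h).1
      · intro h; exact hne _ hfx _ hey ((Prod.ext_iff.mp h).1).symm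
      · intro h; exact h2 (Prod.ext_iff.mp h).1

lemma card_phiM (X Y : Finset V) (w : V → V → ℕ)
    {M : Finset (V × V)} (hM : IsBMatching X Y w M) :
    (phiM w M).card = mWt w M := by
  classical
  rw [phiM, Finset.card_biUnion]
  · refine Finset.sum_congr rfl fun e _ => ?_
    rw [Finset.card_image_of_injOn, Nat.card_Icc]
    · omega
    · intro i _ j _ h
      exact congrArg (fun p => p.1.2) h
  · intro e he f hf hef
    obtain ⟨h1, _⟩ := hM.2 e he f hf hef
    simp only [Finset.disjoint_left, Finset.mem_image, Finset.mem_Icc]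
    rintro a ⟨i, _, rfl⟩ ⟨j, _, h⟩
    exact h1 (congrArg (fun p => p.1.1) h).symm

lemma card_le_coverWt (X Y : Finset V) (w : V → V → ℕ) (C : V → ℕ)
    (hC : IsCover X Y w C) (N : Finset ((V × ℕ) × (V × ℕ)))
    (hN : IsUMatching (phiAdj X Y w) N) : N.card ≤ coverWt X Y C := by
  classical
  set S : Finset (V × ℕ) :=
    (X ∪ Y).biUnion (fun u => (Finset.Icc 1 (C u)).image fun i => (u, i)) with hS
  have hScard : S.card = coverWt X Y C := by
    rw [hS, Finset.card_biUnion, coverWt]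
    · refine Finset.sum_congr rfl fun u _ => ?_
      rw [Finset.card_image_of_injOn, Nat.card_Icc]
      · omega
      · intro i _ j _ h
        exact congrArg Prod.snd h
    · intro u _ v _ huv
      simp only [Finset.disjoint_left, Finset.mem_image, Finset.mem_Icc]
      rintro a ⟨i, _, rfl⟩ ⟨j, _, h⟩
      exact huv (congrArg Prod.fst h).symm
  set g : (V × ℕ) × (V × ℕ) → V × ℕ := fun e => if e.1.2 ≤ C e.1.1 then e.1 else e.2
    with hg
  have key : ∀ e ∈ N, g e ∈ S := by
    intro e he
    have hadj := hN.1 e he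
    have hmem : e.1.1 ∈ X ∪ Y ∧ e.2.1 ∈ X ∪ Y ∧ 1 ≤ e.1.2 ∧ 1 ≤ e.2.2 ∧
        (e.1.2 ≤ C e.1.1 ∨ e.2.2 ≤ C e.2.1) := by
      rcases hadj with ⟨hx, hy, h1, h2, _, heq⟩ | ⟨hx, hy, h1, h2, _, heq⟩
      · have := hC _ hx _ hy
        exact ⟨Finset.mem_union_left _ hx, Finset.mem_union_right _ hy, h1, h2, by omega⟩
      · have := hC _ hx _ hy
        exact ⟨Finset.mem_union_right _ hy, Finset.mem_union_left _ hx, h2, h1, by omega⟩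
    obtain ⟨hu1, hu2, hi1, hi2, hor⟩ := hmem
    rw [hg]
    simp only
    split_ifs with h
    · exact Finset.mem_biUnion.mpr ⟨e.1.1, hu1,
        Finset.mem_image.mpr ⟨e.1.2, Finset.mem_Icc.mpr ⟨hi1, h⟩, rfl⟩⟩
    · have h2 : e.2.2 ≤ C e.2.1 := by tauto
      exact Finset.mem_biUnion.mpr ⟨e.2.1, hu2,
        Finset.mem_image.mpr ⟨e.2.2, Finset.mem_Icc.mpr ⟨hi2, h2⟩, rfl⟩⟩
  have hinj : Set.InjOn g N := by
    intro e he f hf hgef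
    by_contra hef
    obtain ⟨h1, h2, h3, h4⟩ := hN.2.2 e he f hf hef
    rw [hg] at hgef
    simp only at hgef
    split_ifs at hgef <;> [exact h1 hgef; exact h2 hgef; exact h3 hgef; exact h4 hgef]
  calc N.card ≤ S.card := Finset.card_le_card_of_injOn g key hinj
    _ = coverWt X Y C := hScard

/-- Unfolded graph duality: the maximum weight of a matching of `G` equals the
maximum cardinality of a matching of the unfolded graph `φ(G)`. -/
theorem mwm_eq_mm_unfolded
    (X Y : Finset V) (hXY : Disjoint X Y) (w : V → V → ℕ)
    (hisoX : ∀ u ∈ X, ∃ y ∈ Y, 0 < w u y)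
    (hisoY : ∀ v ∈ Y, ∃ x ∈ X, 0 < w x v)
    (hKE : ∀ w' : V → V → ℕ, ∃ (C : V → ℕ) (M : Finset (V × V)),
      IsCover X Y w' C ∧ IsBMatching X Y w' M ∧ mWt w' M = coverWt X Y C) :
    mwm X Y w =
      sSup {n : ℕ | ∃ M : Finset ((V × ℕ) × (V × ℕ)),
        IsUMatching (phiAdj X Y w) M ∧ M.card = n} := by
  classical
  obtain ⟨C, M0, hC, hM0, hdual⟩ := hKE w
  set T := {n : ℕ | ∃ M : Finset ((V × ℕ) × (V × ℕ)),
    IsUMatching (phiAdj X Y w) M ∧ M.card = n} with hT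
  have hub : ∀ n ∈ T, n ≤ coverWt X Y C := by
    rintro n ⟨N, hN, rfl⟩
    exact card_le_coverWt X Y w C hC N hN
  have hbdd : BddAbove T := ⟨_, hub⟩
  have hne : T.Nonempty := ⟨0, ∅, ⟨by simp, by simp, by simp⟩, rfl⟩
  apply le_antisymm
  · apply Finset.sup_le
    intro M hM
    simp only [Finset.mem_filter] at hM
    refine le_csSup hbdd ?_
    exact ⟨phiM w M, phiM_isUMatching X Y hXY w M hM.2, card_phiM X Y w hM.2⟩
  · refine csSup_le hne fun n hn => ?_
    have h1 := hub n hn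
    have h2 : coverWt X Y C ≤ mwm X Y w := by
      rw [← hdual]
      exact Finset.le_sup (by simp [Finset.mem_filter, hM0])
    omega
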